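/- If there exists an even positive integer n for which the minimal positive integer K satisfying the large-squares property for n equals K̃, then there are infinitely many positive integers (namely all 4^α·n for α ≥ 0) for which the minimal such K equals K̃. -/
import Mathlib


/-- `m` has the large-squares property with positive integer constant `K`. -/
def LargeSquares (K m : ℕ) : Prop :=
  ∃ a : Fin 4 → ℕ, (∑ i, (a i) ^ 2 = m) ∧
    ∀ i, a i = 0 ∨ m ≤ K ^ 2 * (a i) ^ 2

/-- `K` is the minimal positive integer constant for `m`. -/
def MinimalConst (K m : ℕ) : Prop :=
  0 < K ∧ LargeSquares K m ∧ ∀ K', 0 < K' → LargeSquares K' m → K ≤ K'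

lemma sq_class (a : ℕ) : (∃ b s, a = 2 * b ∧ a ^ 2 = 4 * s ∧ s = b ^ 2) ∨ (∃ s, a ^ 2 = 8 * s + 1) := by
  rcases Nat.even_or_odd a with ⟨b, hb⟩ | ⟨b, hb⟩
  · exact Or.inl ⟨b, b ^ 2, by omega, by subst hb; ring, rfl⟩
  · right
    obtain ⟨c, hc⟩ : Even (b * (b + 1)) := Nat.even_mul_succ_self b
    exact ⟨c, by subst hb; nlinarith⟩

lemma LargeSquares.up {K m : ℕ} (h : LargeSquares K m) : LargeSquares K (4 * m) := by
  obtain ⟨a, hsum, hcond⟩ := h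
  refine ⟨fun i => 2 * a i, ?_, ?_⟩
  · simp only [mul_pow]; rw [← Finset.mul_sum, hsum]; ring
  · intro i
    rcases hcond i with h | h
    · left; show 2 * a i = 0; omega
    · right; calc 4 * m ≤ 4 * (K ^ 2 * a i ^ 2) := by omega
        _ = K ^ 2 * (2 * a i) ^ 2 := by ring

lemma LargeSquares.down {K m : ℕ} (hev : Even m) (h : LargeSquares K (4 * m)) :
    LargeSquares K m := by
  obtain ⟨m', hm'⟩ := hev
  obtain ⟨a, hsum, hcond⟩ := h
  rw [Fin.sum_univ_four] at hsum
  rcases sq_class (a 0) with ⟨b0, s0, hb0, hs0, hbs0⟩ | ⟨s0, hs0⟩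
  rotate_left
  · rcases sq_class (a 1) with ⟨_, s1, _, hs1, _⟩ | ⟨s1, hs1⟩ <;>
      rcases sq_class (a 2) with ⟨_, s2, _, hs2, _⟩ | ⟨s2, hs2⟩ <;>
      rcases sq_class (a 3) with ⟨_, s3, _, hs3, _⟩ | ⟨s3, hs3⟩ <;> omega
  rcases sq_class (a 1) with ⟨b1, s1, hb1, hs1, hbs1⟩ | ⟨s1, hs1⟩
  rotate_left
  · rcases sq_class (a 2) with ⟨_, s2, _, hs2, _⟩ | ⟨s2, hs2⟩ <;>
      rcases sq_class (a 3) with ⟨_, s3, _, hs3, _⟩ | ⟨s3, hs3⟩ <;> omega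
  rcases sq_class (a 2) with ⟨b2, s2, hb2, hs2, hbs2⟩ | ⟨s2, hs2⟩
  rotate_left
  · rcases sq_class (a 3) with ⟨_, s3, _, hs3, _⟩ | ⟨s3, hs3⟩ <;> omega
  rcases sq_class (a 3) with ⟨b3, s3, hb3, hs3, hbs3⟩ | ⟨s3, hs3⟩
  rotate_left
  · omega
  refine ⟨![b0, b1, b2, b3], ?_, ?_⟩
  · rw [Fin.sum_univ_four]
    simp only [Matrix.cons_val_zero, Matrix.cons_val_one, Matrix.head_cons,
      Matrix.cons_val_two, Matrix.tail_cons, Matrix.cons_val_three]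
    omega
  · intro i
    have key : ∀ j : Fin 4, ∀ b : ℕ, a j = 2 * b → (b = 0 ∨ m ≤ K ^ 2 * b ^ 2) := by
      intro j b hj
      rcases hcond j with h | h
      · left; omega
      · right
        have : K ^ 2 * a j ^ 2 = 4 * (K ^ 2 * b ^ 2) := by rw [hj]; ring
        omega
    fin_cases i
    · exact key 0 b0 hb0
    · exact key 1 b1 hb1
    · exact key 2 b2 hb2
    · exact key 3 b3 hb3

lemma MinimalConst.up {K m : ℕ} (hev : Even m) (h : MinimalConst K m) :
    MinimalConst K (4 * m) := by
  obtain ⟨hK, hls, hmin⟩ := h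
  exact ⟨hK, hls.up, fun K' hK' hls' => hmin K' hK' (hls'.down hev)⟩

theorem minimal_const_infinite (Kmin n : ℕ) (hn : 0 < n) (hev : Even n)
    (hmin : MinimalConst Kmin n) :
    {m : ℕ | 0 < m ∧ MinimalConst Kmin m}.Infinite := by
  have key : ∀ α : ℕ, 0 < 4 ^ α * n ∧ Even (4 ^ α * n) ∧ MinimalConst Kmin (4 ^ α * n) := by
    intro α
    induction α with
    | zero => simpa using ⟨hn, hev, hmin⟩
    | succ k ih =>
      obtain ⟨hp, he, hm⟩ := ih
      have h4 : 4 ^ (k + 1) * n = 4 * (4 ^ k * n) := by ring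
      rw [h4]
      exact ⟨by positivity, he.mul_left 4, hm.up he⟩
  apply Set.infinite_of_injective_forall_mem (f := fun α : ℕ => 4 ^ α * n)
  · intro x y hxy
    simp only at hxy
    have := Nat.eq_of_mul_eq_mul_right hn hxy
    exact Nat.pow_right_injective (by norm_num) this
  · intro α
    exact ⟨(key α).1, (key α).2.2⟩
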